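/- Let U ⊆ ℝⁿ be open and bounded and let f : closure(U) → ℝ be continuous with f(x) > 0 for every x ∈ U. Then any two viscosity solutions of |Du| = f in U with zero Dirichlet boundary data coincide on U; i.e., the viscosity solution, if it exists, is unique. -/

import Mathlib

open Filter Set Real
open Topology

/-- A bounded uniformly continuous function `u` on `closure U` is a viscosity
subsolution of `|Du| = f` in `U` with zero Dirichlet boundary data if `u ≤ 0` on `∂U`
and whenever `φ` is continuously differentiable and `u - φ` attains a local maximum at
`x₀ ∈ U`, then `‖Dφ(x₀)‖ ≤ f(x₀)`. -/
def IsViscositySubsolutionEikonal (n : ℕ) (U : Set (EuclideanSpace ℝ (Fin n)))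
    (f u : EuclideanSpace ℝ (Fin n) → ℝ) : Prop :=
  (∀ x ∈ frontier U, u x ≤ 0) ∧
    ∀ φ : EuclideanSpace ℝ (Fin n) → ℝ, ContDiff ℝ 1 φ →
      ∀ x₀ ∈ U, IsLocalMax (fun x => u x - φ x) x₀ → ‖fderiv ℝ φ x₀‖ ≤ f x₀

/-- Viscosity supersolution of `|Du| = f` in `U` with zero Dirichlet boundary data. -/
def IsViscositySupersolutionEikonal (n : ℕ) (U : Set (EuclideanSpace ℝ (Fin n)))
    (f u : EuclideanSpace ℝ (Fin n) → ℝ) : Prop :=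
  (∀ x ∈ frontier U, 0 ≤ u x) ∧
    ∀ φ : EuclideanSpace ℝ (Fin n) → ℝ, ContDiff ℝ 1 φ →
      ∀ x₀ ∈ U, IsLocalMin (fun x => u x - φ x) x₀ → f x₀ ≤ ‖fderiv ℝ φ x₀‖

/-- Viscosity solution of `|Du| = f` in `U` with zero Dirichlet boundary data:
a bounded, uniformly continuous function on `closure U` that is both a viscosity
subsolution and a viscosity supersolution. -/
def IsViscositySolutionEikonal (n : ℕ) (U : Set (EuclideanSpace ℝ (Fin n)))
    (f u : EuclideanSpace ℝ (Fin n) → ℝ) : Prop :=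
  UniformContinuousOn u (closure U) ∧ Bornology.IsBounded (u '' closure U) ∧
    IsViscositySubsolutionEikonal n U f u ∧ IsViscositySupersolutionEikonal n U f u


private lemma two_smul_innerSL_norm {n : ℕ} (w : EuclideanSpace ℝ (Fin n)) :
    ‖(2 • innerSL ℝ w : EuclideanSpace ℝ (Fin n) →L[ℝ] ℝ)‖ = 2 * ‖w‖ := by
  rw [← Nat.cast_smul_eq_nsmul ℝ, norm_smul, innerSL_apply_norm]
  simp

private lemma smul_two_smul_innerSL_norm {n : ℕ} (c : ℝ) (w : EuclideanSpace ℝ (Fin n)) :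
    ‖c • (2 • innerSL ℝ w : EuclideanSpace ℝ (Fin n) →L[ℝ] ℝ)‖ = |c| * (2 * ‖w‖) := by
  have e : c • (2 • innerSL ℝ w : EuclideanSpace ℝ (Fin n) →L[ℝ] ℝ)
      = (c * 2) • innerSL ℝ w := by
    rw [← Nat.cast_smul_eq_nsmul ℝ, smul_smul]; norm_num
  rw [e, _root_.norm_smul (c * 2) (innerSL ℝ w), innerSL_apply_norm, Real.norm_eq_abs, abs_mul]
  simp [mul_assoc]

private lemma hasFDeriv1 {n : ℕ} (y x : EuclideanSpace ℝ (Fin n)) (c : ℝ) :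
    HasFDerivAt (fun z => c * ‖z - y‖ ^ 2) (c • (2 • innerSL ℝ (x - y))) x := by
  have h0 : HasFDerivAt (fun z : EuclideanSpace ℝ (Fin n) => ‖z - y‖ ^ 2)
      (2 • innerSL ℝ (x - y)) x := by
    have := ((hasFDerivAt_id x).sub_const y).norm_sq
    simpa using this
  exact h0.const_mul c

private lemma hasFDeriv2 {n : ℕ} (c' y : EuclideanSpace ℝ (Fin n)) (c : ℝ) :
    HasFDerivAt (fun z => c * ‖c' - z‖ ^ 2) (c • (2 • innerSL ℝ (y - c'))) y := by
  have h0 : HasFDerivAt (fun z : EuclideanSpace ℝ (Fin n) => ‖c' - z‖ ^ 2)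
      (2 • innerSL ℝ (y - c')) y := by
    have := ((hasFDerivAt_id y).const_sub c').norm_sq
    simpa [map_sub] using this
  exact h0.const_mul c

set_option maxHeartbeats 1000000 in
private lemma visc_comparison
    (n : ℕ) (U : Set (EuclideanSpace ℝ (Fin n)))
    (hUopen : IsOpen U) (hUbdd : Bornology.IsBounded U)
    (f : EuclideanSpace ℝ (Fin n) → ℝ)
    (hf : ContinuousOn f (closure U)) (hf0 : ∀ x ∈ U, 0 < f x)
    (u v : EuclideanSpace ℝ (Fin n) → ℝ)
    (hu : IsViscositySolutionEikonal n U f u)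
    (hv : IsViscositySolutionEikonal n U f v) :
    ∀ x ∈ U, u x ≤ v x := by
  by_contra hcon
  push_neg at hcon
  obtain ⟨x₀, hx₀U, hx₀⟩ := hcon
  have hucont : ContinuousOn u (closure U) := hu.1.continuousOn
  have hvcont : ContinuousOn v (closure U) := hv.1.continuousOn
  have hKco : IsCompact (closure U) := hUbdd.isCompact_closure
  have hUK : U ⊆ closure U := subset_closure
  -- a bound for v on closure U
  obtain ⟨Cv, hCv⟩ : ∃ C, ∀ x ∈ closure U, |v x| ≤ C := by
    obtain ⟨C, hC⟩ := hv.2.1.exists_norm_le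
    exact ⟨C, fun x hx => by simpa [Real.norm_eq_abs] using hC _ (mem_image_of_mem v hx)⟩
  -- maximum point of u - v on closure U
  obtain ⟨xh, hxhK, hxhmax⟩ := hKco.exists_isMaxOn ⟨x₀, hUK hx₀U⟩ (hucont.sub hvcont)
  have hσpos : 0 < u xh - v xh := lt_of_lt_of_le (sub_pos.mpr hx₀) (hxhmax (hUK hx₀U))
  set σ : ℝ := u xh - v xh with hσdef
  have hxhU : xh ∈ U := by
    by_contra hnot
    have hfr : xh ∈ frontier U := by rw [hUopen.frontier_eq]; exact ⟨hxhK, hnot⟩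
    have h1 := hu.2.2.1.1 xh hfr
    have h2 := hv.2.2.2.1 xh hfr
    have : σ ≤ 0 := by rw [hσdef]; linarith
    linarith
  -- choose ε
  have hden : 0 < |u xh| + σ := add_pos_of_nonneg_of_pos (abs_nonneg _) hσpos
  set ε : ℝ := σ / (2 * (|u xh| + σ)) with hεdef
  have hε0 : 0 < ε := by positivity
  have hε1 : ε < 1 := by
    rw [hεdef, div_lt_one (by positivity)]
    nlinarith [abs_nonneg (u xh)]
  have hone : 0 < 1 - ε := by linarith
  have hεu : ε * u xh ≤ σ / 2 := by
    have h1 : ε * u xh ≤ ε * |u xh| := mul_le_mul_of_nonneg_left (le_abs_self _) hε0.le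
    have h2 : ε * |u xh| ≤ σ / 2 := by
      rw [hεdef, div_mul_eq_mul_div, div_le_div_iff₀ (by positivity) two_pos]
      nlinarith [abs_nonneg (u xh)]
    linarith
  set c : ℝ := (1 - ε) * u xh - v xh with hcdef
  have hcσ : σ / 2 ≤ c := by
    have : c = σ - ε * u xh := by rw [hcdef, hσdef]; ring
    linarith
  have hc0 : 0 < c := lt_of_lt_of_le (by linarith) hcσ
  -- doubling of variables
  set δ : ℕ → ℝ := fun k => ((k : ℝ) + 1)⁻¹ with hδdef
  have hδpos : ∀ k, 0 < δ k := fun k => by positivity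
  set Φ : ℕ → EuclideanSpace ℝ (Fin n) × EuclideanSpace ℝ (Fin n) → ℝ :=
    fun k p => (1 - ε) * u p.1 - v p.2 - (δ k)⁻¹ * ‖p.1 - p.2‖ ^ 2 with hΦdef
  have hΦcont : ∀ k, ContinuousOn (Φ k) (closure U ×ˢ closure U) := by
    intro k
    exact ((continuousOn_const.mul (hucont.comp continuousOn_fst fun p hp => hp.1)).sub
      (hvcont.comp continuousOn_snd fun p hp => hp.2)).sub
      ((continuous_const.mul ((continuous_fst.sub continuous_snd).norm.pow 2)).continuousOn)
  have hprodco : IsCompact ((closure U) ×ˢ (closure U)) := hKco.prod hKco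
  have hexists : ∀ k, ∃ p ∈ (closure U) ×ˢ (closure U),
      ∀ q ∈ (closure U) ×ˢ (closure U), Φ k q ≤ Φ k p := by
    intro k
    obtain ⟨p, hp, hmax⟩ := hprodco.exists_isMaxOn ⟨(xh, xh), ⟨hUK hxhU, hUK hxhU⟩⟩ (hΦcont k)
    exact ⟨p, hp, fun q hq => hmax hq⟩
  choose p hpmem hpmax using hexists
  set x : ℕ → EuclideanSpace ℝ (Fin n) := fun k => (p k).1 with hxdef
  set y : ℕ → EuclideanSpace ℝ (Fin n) := fun k => (p k).2 with hydef
  have hxK : ∀ k, x k ∈ closure U := fun k => (hpmem k).1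
  have hyK : ∀ k, y k ∈ closure U := fun k => (hpmem k).2
  have hΦpk : ∀ k, Φ k (p k) = (1 - ε) * u (x k) - v (y k) - (δ k)⁻¹ * ‖x k - y k‖ ^ 2 := by
    intro k; simp only [hΦdef, hxdef, hydef]
  -- lower bound c
  have hlow : ∀ k, c ≤ Φ k (p k) := by
    intro k
    have h := hpmax k (xh, xh) ⟨hUK hxhU, hUK hxhU⟩
    have e : Φ k (xh, xh) = c := by
      simp only [hΦdef, hcdef]; simp
    linarith
  have hlow2 : ∀ k, c ≤ (1 - ε) * u (x k) - v (y k) := by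
    intro k
    have h := hlow k
    rw [hΦpk k] at h
    have hq : 0 ≤ (δ k)⁻¹ * ‖x k - y k‖ ^ 2 := by positivity
    linarith
  -- distance estimate
  have hdist2 : ∀ k, ‖x k - y k‖ ^ 2 ≤ 2 * Cv * δ k := by
    intro k
    have h := hpmax k (x k, x k) ⟨hxK k, hxK k⟩
    rw [hΦpk k] at h
    have e : Φ k (x k, x k) = (1 - ε) * u (x k) - v (x k) := by
      simp only [hΦdef]; simp
    rw [e] at h
    have b1 := abs_le.mp (hCv _ (hxK k))
    have b2 := abs_le.mp (hCv _ (hyK k))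
    have h3 : (δ k)⁻¹ * ‖x k - y k‖ ^ 2 ≤ 2 * Cv := by linarith
    have hδk := hδpos k
    have hδinv : δ k * (δ k)⁻¹ = 1 := mul_inv_cancel₀ hδk.ne'
    nlinarith [mul_le_mul_of_nonneg_left h3 hδk.le]
  have hCv0 : 0 ≤ Cv := le_trans (abs_nonneg _) (hCv _ (hUK hxhU))
  have hδtend : Tendsto δ atTop (𝓝 0) := by
    simpa [hδdef, one_div] using tendsto_one_div_add_atTop_nhds_zero_nat (𝕜 := ℝ)
  have hdisttend : Tendsto (fun k => ‖x k - y k‖) atTop (𝓝 0) := by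
    have h2 : Tendsto (fun k => ‖x k - y k‖ ^ 2) atTop (𝓝 0) := by
      apply squeeze_zero (fun k => by positivity) hdist2
      simpa using hδtend.const_mul (2 * Cv)
    have h3 := (Real.continuous_sqrt.tendsto 0).comp h2
    rw [Real.sqrt_zero] at h3
    exact Filter.Tendsto.congr (fun k => Real.sqrt_sq (norm_nonneg _)) h3
  -- convergent subsequence
  obtain ⟨xb, hxbK, φs, hφmono, hφtend⟩ := hKco.tendsto_subseq hxK
  have hytend : Tendsto (y ∘ φs) atTop (𝓝 xb) := by
    rw [tendsto_iff_dist_tendsto_zero]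
    apply squeeze_zero (fun k => dist_nonneg)
      (g := fun k => ‖x (φs k) - y (φs k)‖ + dist (x (φs k)) xb)
    · intro k
      calc dist (y (φs k)) xb ≤ dist (y (φs k)) (x (φs k)) + dist (x (φs k)) xb :=
            dist_triangle _ _ _
        _ = ‖x (φs k) - y (φs k)‖ + dist (x (φs k)) xb := by
            rw [dist_eq_norm, norm_sub_rev]
    · have h1 : Tendsto (fun k => ‖x (φs k) - y (φs k)‖) atTop (𝓝 0) :=
        hdisttend.comp hφmono.tendsto_atTop
      have h2 : Tendsto (fun k => dist (x (φs k)) xb) atTop (𝓝 0) :=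
        tendsto_iff_dist_tendsto_zero.mp hφtend
      simpa using h1.add h2
  have hxtendW : Tendsto (x ∘ φs) atTop (𝓝[closure U] xb) :=
    tendsto_nhdsWithin_iff.mpr ⟨hφtend, Eventually.of_forall fun k => hxK _⟩
  have hytendW : Tendsto (y ∘ φs) atTop (𝓝[closure U] xb) :=
    tendsto_nhdsWithin_iff.mpr ⟨hytend, Eventually.of_forall fun k => hyK _⟩
  -- limit of the lower bound
  have hulim : Tendsto (fun k => u (x (φs k))) atTop (𝓝 (u xb)) :=
    (hucont xb hxbK).tendsto.comp hxtendW
  have hvlim : Tendsto (fun k => v (y (φs k))) atTop (𝓝 (v xb)) :=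
    (hvcont xb hxbK).tendsto.comp hytendW
  have hclim : c ≤ (1 - ε) * u xb - v xb := by
    refine le_of_tendsto_of_tendsto' tendsto_const_nhds
      ((tendsto_const_nhds.mul hulim).sub hvlim) (fun k => hlow2 (φs k))
  have hxbU : xb ∈ U := by
    by_contra hnot
    have hfr : xb ∈ frontier U := by rw [hUopen.frontier_eq]; exact ⟨hxbK, hnot⟩
    have h1 := hu.2.2.1.1 xb hfr
    have h2 := hv.2.2.2.1 xb hfr
    nlinarith
  -- the viscosity inequality at interior doubling points
  have hkey : ∀ k, x k ∈ U → y k ∈ U → f (y k) ≤ (1 - ε) * f (x k) := by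
    intro k hxU hyU
    have hδk := hδpos k
    set c₀ : ℝ := (δ k)⁻¹ / (1 - ε) with hc₀def
    have hc₀pos : 0 < c₀ := by positivity
    have hc₀e : (1 - ε) * c₀ = (δ k)⁻¹ := by
      rw [hc₀def]; field_simp
    -- subsolution test
    have hφ1diff : ContDiff ℝ 1 (fun z : EuclideanSpace ℝ (Fin n) => c₀ * ‖z - y k‖ ^ 2) :=
      contDiff_const.mul ((contDiff_id.sub contDiff_const).norm_sq (𝕜 := ℝ))
    have hmax1 : IsLocalMax (fun z => u z - c₀ * ‖z - y k‖ ^ 2) (x k) := by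
      filter_upwards [hUopen.mem_nhds hxU] with z hz
      have h := hpmax k (z, y k) ⟨hUK hz, hyK k⟩
      rw [hΦpk k] at h
      have e : Φ k (z, y k) = (1 - ε) * u z - v (y k) - (δ k)⁻¹ * ‖z - y k‖ ^ 2 := by
        simp only [hΦdef]
      rw [e] at h
      have key : (1 - ε) * (u z - c₀ * ‖z - y k‖ ^ 2)
          ≤ (1 - ε) * (u (x k) - c₀ * ‖x k - y k‖ ^ 2) := by
        have r1 : (1 - ε) * (c₀ * ‖z - y k‖ ^ 2) = (δ k)⁻¹ * ‖z - y k‖ ^ 2 := by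
          rw [← mul_assoc, hc₀e]
        have r2 : (1 - ε) * (c₀ * ‖x k - y k‖ ^ 2) = (δ k)⁻¹ * ‖x k - y k‖ ^ 2 := by
          rw [← mul_assoc, hc₀e]
        rw [mul_sub, mul_sub, r1, r2]
        linarith
      exact le_of_mul_le_mul_left key hone
    have hsub := hu.2.2.1.2 (fun z => c₀ * ‖z - y k‖ ^ 2) hφ1diff (x k) hxU hmax1
    rw [(hasFDeriv1 (y k) (x k) c₀).fderiv] at hsub
    rw [smul_two_smul_innerSL_norm, abs_of_pos hc₀pos] at hsub
    -- supersolution test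
    have hφ2diff : ContDiff ℝ 1 (fun z : EuclideanSpace ℝ (Fin n) => -(δ k)⁻¹ * ‖x k - z‖ ^ 2) :=
      contDiff_const.mul ((contDiff_const.sub contDiff_id).norm_sq (𝕜 := ℝ))
    have hmin2 : IsLocalMin (fun z => v z - -(δ k)⁻¹ * ‖x k - z‖ ^ 2) (y k) := by
      filter_upwards [hUopen.mem_nhds hyU] with z hz
      have h := hpmax k (x k, z) ⟨hxK k, hUK hz⟩
      rw [hΦpk k] at h
      have e : Φ k (x k, z) = (1 - ε) * u (x k) - v z - (δ k)⁻¹ * ‖x k - z‖ ^ 2 := by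
        simp only [hΦdef]
      rw [e] at h
      linarith
    have hsup := hv.2.2.2.2 (fun z => -(δ k)⁻¹ * ‖x k - z‖ ^ 2) hφ2diff (y k) hyU hmin2
    rw [(hasFDeriv2 (x k) (y k) (-(δ k)⁻¹)).fderiv] at hsup
    rw [smul_two_smul_innerSL_norm, abs_neg,
      abs_of_pos (by positivity : (0:ℝ) < (δ k)⁻¹), norm_sub_rev (y k) (x k)] at hsup
    -- combine
    have e3 : (δ k)⁻¹ * (2 * ‖x k - y k‖) = (1 - ε) * (c₀ * (2 * ‖x k - y k‖)) := by
      rw [← hc₀e]; ring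
    have h4 : (1 - ε) * (c₀ * (2 * ‖x k - y k‖)) ≤ (1 - ε) * f (x k) :=
      mul_le_mul_of_nonneg_left hsub hone.le
    linarith
  have hevx : ∀ᶠ k in atTop, x (φs k) ∈ U := hφtend.eventually (hUopen.eventually_mem hxbU)
  have hevy : ∀ᶠ k in atTop, y (φs k) ∈ U := hytend.eventually (hUopen.eventually_mem hxbU)
  have hev : ∀ᶠ k in atTop, f (y (φs k)) ≤ (1 - ε) * f (x (φs k)) := by
    filter_upwards [hevx, hevy] with k h1 h2
    exact hkey _ h1 h2
  have hflim1 : Tendsto (fun k => f (y (φs k))) atTop (𝓝 (f xb)) :=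
    (hf xb hxbK).tendsto.comp hytendW
  have hflim2 : Tendsto (fun k => (1 - ε) * f (x (φs k))) atTop (𝓝 ((1 - ε) * f xb)) :=
    tendsto_const_nhds.mul ((hf xb hxbK).tendsto.comp hxtendW)
  have hfin : f xb ≤ (1 - ε) * f xb := le_of_tendsto_of_tendsto hflim1 hflim2 hev
  nlinarith [hf0 xb hxbU]


/-- let `U ⊆ ℝⁿ` be open and bounded and `f` continuous on `closure U`
with `f(x) > 0` for every `x ∈ U`. Then any two viscosity solutions of `|Du| = f` in
`U` with zero Dirichlet boundary data coincide on `U`: the viscosity solution, if it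
exists, is unique. -/
theorem eikonal_uniqueness_positive_f
    (n : ℕ) (U : Set (EuclideanSpace ℝ (Fin n)))
    (hUopen : IsOpen U) (hUbdd : Bornology.IsBounded U)
    (f : EuclideanSpace ℝ (Fin n) → ℝ)
    (hf : ContinuousOn f (closure U)) (hf0 : ∀ x ∈ U, 0 < f x)
    (u v : EuclideanSpace ℝ (Fin n) → ℝ)
    (hu : IsViscositySolutionEikonal n U f u)
    (hv : IsViscositySolutionEikonal n U f v) :
    ∀ x ∈ U, u x = v x := by
  intro z hz
  exact le_antisymm (visc_comparison n U hUopen hUbdd f hf hf0 u v hu hv z hz)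
    (visc_comparison n U hUopen hUbdd f hf hf0 v u hv hu z hz)
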